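/- Let $p_1, \dots, p_n$ be i.i.d. nonnegative random variables, independent of a positive-integer-valued random variable $n$, and let $\eta = \max_{1 \le i \le n} p_i$. If $\mathbb{E}[p_1^k] < \infty$ for a natural number $k \ge 1$, then $\mathbb{E}[\eta] \le (\mathbb{E}[n])^{1/k} \cdot (\mathbb{E}[p_1^k])^{1/k}$. -/

import Mathlib

open MeasureTheory ProbabilityTheory Real Finset
open scoped ENNReal NNReal

theorem stmt_4 {Ω : Type*} [MeasureSpace Ω] [IsProbabilityMeasure (volume : Measure Ω)]
    (p : ℕ → Ω → ℝ) (n : Ω → ℕ)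
    (hpmeas : ∀ i, Measurable (p i)) (hnmeas : Measurable n)
    (hp0 : ∀ i ω, 0 ≤ p i ω) (hn : ∀ ω, 1 ≤ n ω)
    -- i.i.d. workloads
    (hident : ∀ i, IdentDistrib (p i) (p 0) volume volume)
    (hindep : iIndepFun p volume)
    -- the number of summands is independent of the workloads
    (hnindep : IndepFun n (fun ω i => p i ω) volume)
    (k : ℕ) (hk : 1 ≤ k)
    (hmom : Integrable (fun ω => (p 0 ω) ^ k))
    (hnint : Integrable (fun ω => (n ω : ℝ)))
    (η : Ω → ℝ)
    (hη : ∀ ω, η ω = (Finset.range (n ω)).sup'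
      (Finset.nonempty_range_iff.mpr (Nat.one_le_iff_ne_zero.mp (hn ω))) (fun i => p i ω))
    (hηint : Integrable η) :
    ∫ ω, η ω ≤ (∫ ω, (n ω : ℝ)) ^ ((1 : ℝ) / k) * (∫ ω, (p 0 ω) ^ k) ^ ((1 : ℝ) / k) := by
  have hη0 : ∀ ω, 0 ≤ η ω := by
    intro ω
    rw [hη ω]
    obtain ⟨j, hj, hje⟩ := Finset.exists_mem_eq_sup'
      (Finset.nonempty_range_iff.mpr (Nat.one_le_iff_ne_zero.mp (hn ω))) (fun i => p i ω)
    rw [hje]; exact hp0 j ω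
  -- measurability of η
  have hηmeas : Measurable η := by
    have hG : Measurable (fun q : Ω × ℕ => if h : q.2 ≠ 0 then
        (Finset.range q.2).sup' (Finset.nonempty_range_iff.mpr h) (fun i => p i q.1) else 0) := by
      apply measurable_from_prod_countable_left
      intro m
      rcases eq_or_ne m 0 with rfl | hm
      · simpa using measurable_const
      · simp only [hm, ne_eq, not_false_eq_true, dif_pos]
        have := Finset.measurable_sup' (s := Finset.range m)
          (Finset.nonempty_range_iff.mpr hm) (f := fun i ω => p i ω) (fun i _ => hpmeas i)
        convert this using 1
        funext x
        simp [Finset.sup'_apply]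
    have := hG.comp (measurable_id.prodMk hnmeas)
    convert this using 1
    funext ω
    simp only [Function.comp_apply, hη ω, id]
    rw [dif_pos (Nat.one_le_iff_ne_zero.mp (hn ω))]
  -- the ENNReal-valued k-th powers
  set f : ℕ → Ω → ℝ≥0∞ := fun i ω => ENNReal.ofReal ((p i ω) ^ k) with hf
  have hfmeas : ∀ i, Measurable (f i) :=
    fun i => ENNReal.measurable_ofReal.comp ((hpmeas i).pow_const k)
  set L : ℝ≥0∞ := ∫⁻ ω, f 0 ω with hL
  have hLf : ∀ i, ∫⁻ ω, f i ω = L := by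
    intro i
    exact ((hident i).comp (ENNReal.measurable_ofReal.comp (measurable_id.pow_const k))).lintegral_eq
  -- the indicator of {i < n}
  set g : ℕ → Ω → ℝ≥0∞ := fun i ω => if i < n ω then 1 else 0 with hg
  have hsmeas : ∀ i, MeasurableSet {ω | i < n ω} :=
    fun i => hnmeas measurableSet_Ioi
  have hgmeas : ∀ i, Measurable (g i) := by
    intro i
    exact Measurable.ite (hsmeas i) measurable_const measurable_const
  have hgint : ∀ i, ∫⁻ ω, g i ω = (volume : Measure Ω) {ω | i < n ω} := by
    intro i
    have : g i = Set.indicator {ω | i < n ω} (1 : Ω → ℝ≥0∞) := by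
      funext ω; simp [hg, Set.indicator_apply]
    rw [this, lintegral_indicator_one (hsmeas i)]
  -- independence and product formula
  have hmul : ∀ i, ∫⁻ ω, g i ω * f i ω = (volume : Measure Ω) {ω | i < n ω} * L := by
    intro i
    have h1 : Measurable (fun m : ℕ => if i < m then (1 : ℝ≥0∞) else 0) :=
      Measurable.of_discrete
    have h2 : Measurable (fun v : ℕ → ℝ => ENNReal.ofReal ((v i) ^ k)) :=
      ENNReal.measurable_ofReal.comp ((measurable_pi_apply i).pow_const k)
    have hind : IndepFun (g i) (f i) volume := hnindep.comp h1 h2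
    have := lintegral_mul_eq_lintegral_mul_lintegral_of_indepFun
      (hgmeas i) (hfmeas i) hind
    simp only [Pi.mul_apply] at this
    rw [this, hgint i, hLf i]
  -- tsum expression of finite sums
  have hS : ∀ ω, (∑' i, g i ω * f i ω) = ∑ i ∈ Finset.range (n ω), f i ω := by
    intro ω
    rw [tsum_eq_sum (s := Finset.range (n ω))
      (by intro i hi
          have hlt : ¬ i < n ω := fun h => hi (Finset.mem_range.mpr h)
          simp [hg, hlt])]
    refine Finset.sum_congr rfl fun i hi => ?_
    rw [hg]; simp only [if_pos (Finset.mem_range.mp hi), one_mul]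
  -- Wald
  have hNl : ∑' i, (volume : Measure Ω) {ω | i < n ω} = ∫⁻ ω, (n ω : ℝ≥0∞) := by
    have hpt : ∀ ω, (∑' i, g i ω) = (n ω : ℝ≥0∞) := by
      intro ω
      rw [tsum_eq_sum (s := Finset.range (n ω))
        (by intro i hi
            have hlt : ¬ i < n ω := fun h => hi (Finset.mem_range.mpr h)
            simp [hg, hlt])]
      calc ∑ i ∈ Finset.range (n ω), g i ω
          = ∑ i ∈ Finset.range (n ω), 1 :=
            Finset.sum_congr rfl (fun i hi => by simp [hg, Finset.mem_range.mp hi])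
        _ = (n ω : ℝ≥0∞) := by simp
    calc ∑' i, (volume : Measure Ω) {ω | i < n ω} = ∑' i, ∫⁻ ω, g i ω := by
          simp_rw [hgint]
      _ = ∫⁻ ω, ∑' i, g i ω := (lintegral_tsum fun i => (hgmeas i).aemeasurable).symm
      _ = ∫⁻ ω, (n ω : ℝ≥0∞) := by simp_rw [hpt]
  have hWald : ∫⁻ ω, (∑ i ∈ Finset.range (n ω), f i ω) =
      (∫⁻ ω, (n ω : ℝ≥0∞)) * L := by
    calc ∫⁻ ω, (∑ i ∈ Finset.range (n ω), f i ω) = ∫⁻ ω, ∑' i, g i ω * f i ω := by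
          simp_rw [hS]
      _ = ∑' i, ∫⁻ ω, g i ω * f i ω :=
          lintegral_tsum fun i => ((hgmeas i).mul (hfmeas i)).aemeasurable
      _ = ∑' i, (volume : Measure Ω) {ω | i < n ω} * L := by simp_rw [hmul]
      _ = (∑' i, (volume : Measure Ω) {ω | i < n ω}) * L := ENNReal.tsum_mul_right
      _ = (∫⁻ ω, (n ω : ℝ≥0∞)) * L := by rw [hNl]
  -- express lintegrals as ofReal of integrals
  have hCnn : 0 ≤ ∫ ω, (p 0 ω) ^ k := integral_nonneg fun ω => pow_nonneg (hp0 0 ω) k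
  have hBnn : 0 ≤ ∫ ω, (n ω : ℝ) := integral_nonneg fun ω => Nat.cast_nonneg _
  have hLr : L = ENNReal.ofReal (∫ ω, (p 0 ω) ^ k) :=
    (ofReal_integral_eq_lintegral_ofReal hmom
      (Filter.Eventually.of_forall fun ω => pow_nonneg (hp0 0 ω) k)).symm
  have hNr : ∫⁻ ω, (n ω : ℝ≥0∞) = ENNReal.ofReal (∫ ω, (n ω : ℝ)) := by
    rw [ofReal_integral_eq_lintegral_ofReal hnint
      (Filter.Eventually.of_forall fun ω => Nat.cast_nonneg _)]
    congr 1
    funext ω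
    rw [ENNReal.ofReal_natCast]
  -- pointwise bound η^k ≤ sum
  have hpow : ∀ ω, ENNReal.ofReal (η ω ^ k) ≤ ∑ i ∈ Finset.range (n ω), f i ω := by
    intro ω
    obtain ⟨j, hj, hje⟩ := Finset.exists_mem_eq_sup'
      (Finset.nonempty_range_iff.mpr (Nat.one_le_iff_ne_zero.mp (hn ω))) (fun i => p i ω)
    have : ENNReal.ofReal (η ω ^ k) = f j ω := by rw [hη ω, hje]
    rw [this]
    exact Finset.single_le_sum (f := fun i => f i ω) (fun i _ => zero_le) hj
  have hkey : ∫⁻ ω, ENNReal.ofReal (η ω ^ k) ≤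
      ENNReal.ofReal ((∫ ω, (n ω : ℝ)) * ∫ ω, (p 0 ω) ^ k) := by
    calc ∫⁻ ω, ENNReal.ofReal (η ω ^ k) ≤ ∫⁻ ω, (∑ i ∈ Finset.range (n ω), f i ω) :=
          lintegral_mono fun ω => hpow ω
      _ = (∫⁻ ω, (n ω : ℝ≥0∞)) * L := hWald
      _ = ENNReal.ofReal ((∫ ω, (n ω : ℝ)) * ∫ ω, (p 0 ω) ^ k) := by
          rw [hNr, hLr, ← ENNReal.ofReal_mul hBnn]
  -- integrability of η^k
  have hηk_int : Integrable (fun ω => η ω ^ k) := by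
    refine ⟨(hηmeas.pow_const k).aestronglyMeasurable, ?_⟩
    rw [hasFiniteIntegral_iff_ofReal
      (Filter.Eventually.of_forall fun ω => pow_nonneg (hη0 ω) k)]
    exact lt_of_le_of_lt hkey ENNReal.ofReal_lt_top
  -- E[η^k] ≤ E[n] E[p^k]
  have h2 : ∫ ω, η ω ^ k ≤ (∫ ω, (n ω : ℝ)) * ∫ ω, (p 0 ω) ^ k := by
    rw [← ofReal_integral_eq_lintegral_ofReal hηk_int
      (Filter.Eventually.of_forall fun ω => pow_nonneg (hη0 ω) k)] at hkey
    exact (ENNReal.ofReal_le_ofReal_iff (mul_nonneg hBnn hCnn)).mp hkey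
  -- Jensen
  have hJ : (∫ ω, η ω) ^ k ≤ ∫ ω, η ω ^ k := by
    have := (convexOn_pow k).map_integral_le (μ := (volume : Measure Ω))
      (continuous_pow k).continuousOn isClosed_Ici
      (Filter.Eventually.of_forall fun ω => hη0 ω) hηint ?_
    · exact this
    · exact hηk_int
  have hA : 0 ≤ ∫ ω, η ω := integral_nonneg hη0
  have hBC : (∫ ω, η ω) ^ k ≤ (∫ ω, (n ω : ℝ)) * ∫ ω, (p 0 ω) ^ k := hJ.trans h2
  have hk0 : (k : ℝ) ≠ 0 := Nat.cast_ne_zero.mpr (Nat.one_le_iff_ne_zero.mp hk)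
  calc ∫ ω, η ω = ((∫ ω, η ω) ^ k) ^ ((1 : ℝ) / k) := by
        rw [← Real.rpow_natCast (∫ ω, η ω) k, ← Real.rpow_mul hA, mul_one_div,
          div_self hk0, Real.rpow_one]
    _ ≤ ((∫ ω, (n ω : ℝ)) * ∫ ω, (p 0 ω) ^ k) ^ ((1 : ℝ) / k) :=
        Real.rpow_le_rpow (pow_nonneg hA k) hBC (by positivity)
    _ = (∫ ω, (n ω : ℝ)) ^ ((1 : ℝ) / k) * (∫ ω, (p 0 ω) ^ k) ^ ((1 : ℝ) / k) :=
        Real.mul_rpow hBnn hCnn
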